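/- arXiv:2110.00430 — 2 statements merged into one kernel-verified Lean document; each statement's English description precedes it below -/
import Mathlib

section
/- On an integrable highest weight module of level ℓ over the affine Lie algebra ĝ of a simple Lie algebra g, the Sugawara operators satisfy the Virasoro relations [L_m, L_n] = (m-n)L_{m+n} + (c_v/12)(m³-m)δ_{m+n,0}, where c_v = ℓ·dim(g)/(ℓ + h∨(g)) is the central charge. -/
/-!
STATEMENT 6: On an integrable highest weight module of level `ℓ` over the affine
Lie algebra `ĝ` of a simple Lie algebra `g`, the Sugawara operators
`L_n = (1/2(ℓ+h∨)) ∑_{m∈ℤ} ∑_a :Jᵃ(m)Jᵃ(n-m):` satisfy the Virasoro relations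
`[L_m, L_n] = (m-n) L_{m+n} + (c_v/12)(m³-m) δ_{m+n,0}`, with central charge
`c_v = ℓ·dim g/(ℓ+h∨(g))`.

The module is encoded by operators `ρ X m` (the action of `X⊗tᵐ`) satisfying the
affine commutation relations at level `ℓ` and smoothness (local vanishing); `h∨` is
characterized by the adjoint Casimir identity `∑_a [Jᵃ,[Jᵃ,X]] = 2h∨·X`.
-/

/-- The normally ordered term `:Jᵃ(m)Jᵃ(n-m):` applied to `v` (the operator with the
larger Fourier index acts first). -/
noncomputable def NOterm {g H : Type*} [LieRing g] [LieAlgebra ℂ g]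
    [AddCommGroup H] [Module ℂ H] (ρ : g → ℤ → Module.End ℂ H)
    {d : ℕ} (J : Fin d → g) (a : Fin d) (m n : ℤ) (v : H) : H :=
  if m ≤ n - m then ρ (J a) m (ρ (J a) (n - m) v)
  else ρ (J a) (n - m) (ρ (J a) m v)

/-- The Sugawara operator `L_n = c • ∑_{m∈ℤ} ∑_a :Jᵃ(m)Jᵃ(n-m):` applied to a
vector, where `c = 1/2(ℓ+h∨)`. -/
noncomputable def sugawara {g H : Type*} [LieRing g] [LieAlgebra ℂ g]
    [AddCommGroup H] [Module ℂ H] (ρ : g → ℤ → Module.End ℂ H)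
    {d : ℕ} (J : Fin d → g) (c : ℂ) (n : ℤ) (v : H) : H :=
  c • ∑ᶠ m : ℤ, ∑ a : Fin d, NOterm ρ J a m n v

set_option linter.unusedSectionVars false
set_option maxHeartbeats 1000000

open Finset

namespace SugAux

variable {g H : Type*} [LieRing g] [LieAlgebra ℂ g] [AddCommGroup H] [Module ℂ H]
variable (κ : LinearMap.BilinForm ℂ g) {d : ℕ} (J : Module.Basis (Fin d) ℂ g) (ℓ h : ℂ)
variable (ρ : g → ℤ → Module.End ℂ H)

lemma kappa_repr (hON : ∀ a b : Fin d, κ (J a) (J b) = if a = b then 1 else 0)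
    (X : g) (c : Fin d) : κ X (J c) = J.repr X c := by
  conv_lhs => rw [← J.sum_repr X]
  rw [map_sum, LinearMap.sum_apply]
  simp [hON]

lemma expand (hON : ∀ a b : Fin d, κ (J a) (J b) = if a = b then 1 else 0)
    (X : g) : ∑ c, κ X (J c) • J c = X := by
  simp only [kappa_repr κ J hON]
  exact J.sum_repr X

lemma rho_expand (hlinear : ∀ m : ℤ, IsLinearMap ℂ fun X : g => ρ X m)
    (hON : ∀ a b : Fin d, κ (J a) (J b) = if a = b then 1 else 0)
    (X : g) (r : ℤ) (y : H) :
    ρ X r y = ∑ c, κ X (J c) • ρ (J c) r y := by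
  have hL : ∀ Z : g, ρ Z r = IsLinearMap.mk' (fun X : g => ρ X r) (hlinear r) Z :=
    fun _ => rfl
  conv_lhs => rw [← expand κ J hON X]
  rw [hL, map_sum, LinearMap.sum_apply]
  congr 1
  ext c
  rw [map_smul, LinearMap.smul_apply, ← hL]

lemma antisym (hsymm : ∀ X Y : g, κ X Y = κ Y X)
    (hinv : ∀ X Y Z : g, κ ⁅X, Y⁆ Z = κ X ⁅Y, Z⁆) (X Y Z : g) :
    κ ⁅Z, Y⁆ X = - κ ⁅X, Y⁆ Z := by
  rw [hinv, show ⁅Y, X⁆ = -⁅X, Y⁆ from (lie_skew Y X).symm, map_neg, hsymm]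

lemma comm_v (hcomm : ∀ (X Y : g) (m k : ℤ),
      ρ X m * ρ Y k - ρ Y k * ρ X m
        = ρ ⁅X, Y⁆ (m + k)
          + (if m + k = 0 then (m : ℂ) * κ X Y * ℓ else 0) • (1 : Module.End ℂ H))
    (X Y : g) (m k : ℤ) (v : H) :
    ρ X m (ρ Y k v) - ρ Y k (ρ X m v)
      = ρ ⁅X, Y⁆ (m + k) v + (if m + k = 0 then (m : ℂ) * κ X Y * ℓ else 0) • v := by
  have h2 := congrArg (fun E : Module.End ℂ H => E v) (hcomm X Y m k)
  simp only [LinearMap.sub_apply, LinearMap.add_apply, Module.End.mul_apply,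
    LinearMap.smul_apply, Module.End.one_apply] at h2
  exact h2

include J in
lemma bound (hlinear : ∀ m : ℤ, IsLinearMap ℂ fun X : g => ρ X m)
    (hsmooth : ∀ (X : g) (v : H), ∃ N : ℤ, ∀ m : ℤ, N ≤ m → ρ X m v = 0) (v : H) :
    ∃ N : ℤ, 1 ≤ N ∧ ∀ (X : g) (m : ℤ), N ≤ m → ρ X m v = 0 := by
  classical
  choose Nf hNf using fun a : Fin d => hsmooth (J a) v
  refine ⟨max 1 ((Finset.univ.sup fun a => (Nf a).toNat : ℕ) : ℤ), le_max_left _ _, ?_⟩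
  intro X m hm
  have hbasis : ∀ a : Fin d, ρ (J a) m v = 0 := by
    intro a
    apply hNf a
    have h1 : (Nf a).toNat ≤ (Finset.univ.sup fun a => (Nf a).toNat : ℕ) :=
      Finset.le_sup (f := fun a => (Nf a).toNat) (Finset.mem_univ a)
    calc (Nf a : ℤ) ≤ ((Nf a).toNat : ℤ) := Int.self_le_toNat _
      _ ≤ ((Finset.univ.sup fun a => (Nf a).toNat : ℕ) : ℤ) := by exact_mod_cast h1
      _ ≤ max 1 _ := le_max_right _ _
      _ ≤ m := hm
  have hX : ρ X m v = ∑ a, J.repr X a • ρ (J a) m v := by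
    have hL : ∀ Z : g, ρ Z m = IsLinearMap.mk' (fun X : g => ρ X m) (hlinear m) Z :=
      fun _ => rfl
    conv_lhs => rw [← J.sum_repr X]
    rw [hL, map_sum, LinearMap.sum_apply]
    congr 1
    ext a
    rw [map_smul, LinearMap.smul_apply, ← hL]
  simp [hX, hbasis]

lemma NOterm_eq
    (hON : ∀ a b : Fin d, κ (J a) (J b) = if a = b then 1 else 0)
    (hlinear : ∀ m : ℤ, IsLinearMap ℂ fun X : g => ρ X m)
    (hcomm : ∀ (X Y : g) (m k : ℤ),
      ρ X m * ρ Y k - ρ Y k * ρ X m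
        = ρ ⁅X, Y⁆ (m + k)
          + (if m + k = 0 then (m : ℂ) * κ X Y * ℓ else 0) • (1 : Module.End ℂ H))
    (a : Fin d) (m n : ℤ) (v : H) :
    NOterm ρ (fun a => J a) a m n v
      = ρ (J a) m (ρ (J a) (n - m) v)
        - (if n = 0 ∧ ¬ (m ≤ n - m) then (m : ℂ) * ℓ else 0) • v := by
  unfold NOterm
  by_cases hm : m ≤ n - m
  · simp [hm]
  · rw [if_neg hm]
    have hc := comm_v κ ℓ ρ hcomm (J a) (J a) m (n - m) v
    have hz : ρ ⁅J a, J a⁆ (m + (n - m)) v = 0 := by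
      rw [lie_self, show ρ (0:g) (m + (n-m)) = 0 from (hlinear _).map_zero]
      simp
    rw [hz, zero_add] at hc
    have hidx : m + (n - m) = n := by ring
    rw [hidx] at hc
    have hONaa : κ (J a) (J a) = 1 := by simp [hON]
    rw [hONaa] at hc
    have hsc : (if n = 0 ∧ ¬ (m ≤ n - m) then (m : ℂ) * ℓ else 0)
        = (if n = 0 then (m : ℂ) * 1 * ℓ else 0) := by
      by_cases hn : n = 0
      · rw [if_pos ⟨hn, hm⟩, if_pos hn, mul_one]
      · rw [if_neg (by tauto), if_neg hn]
    rw [hsc, ← hc]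
    abel

lemma NOterm_zero {N : ℤ} {v : H}
    (hN : ∀ (X : g) (m : ℤ), N ≤ m → ρ X m v = 0)
    (a : Fin d) {m n : ℤ} (hm : m ≤ n - N ∨ N ≤ m) :
    NOterm ρ (fun a => J a) a m n v = 0 := by
  unfold NOterm
  split_ifs with hsplit
  · rw [hN _ (n - m) (by omega), map_zero]
  · rw [hN _ m (by omega), map_zero]

lemma NOterm_add (a : Fin d) (m n : ℤ) (v w : H) :
    NOterm ρ (fun a => J a) a m n (v + w)
      = NOterm ρ (fun a => J a) a m n v + NOterm ρ (fun a => J a) a m n w := by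
  unfold NOterm; split_ifs <;> simp

lemma NOterm_smul (a : Fin d) (m n : ℤ) (s : ℂ) (v : H) :
    NOterm ρ (fun a => J a) a m n (s • v) = s • NOterm ρ (fun a => J a) a m n v := by
  unfold NOterm; split_ifs <;> simp

lemma sug_sum_eq {N : ℤ} {v : H}
    (hN : ∀ (X : g) (m : ℤ), N ≤ m → ρ X m v = 0)
    {n M : ℤ} (hM1 : N ≤ M) (hM2 : -M ≤ n - N) :
    ∑ᶠ m : ℤ, ∑ a, NOterm ρ (fun a => J a) a m n v
      = ∑ m ∈ Ioc (-M) M, ∑ a, NOterm ρ (fun a => J a) a m n v := by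
  apply finsum_eq_finset_sum_of_support_subset
  intro m hm
  simp only [Function.mem_support] at hm
  by_contra hmem
  apply hm
  simp only [Finset.coe_Ioc, Set.mem_Ioc, not_and_or, not_lt, not_le] at hmem
  apply Finset.sum_eq_zero
  intro a _
  exact NOterm_zero (J := J) ρ hN a (by omega)




/-- Splitting a sum over `Ioc` in `ℤ`. -/
lemma sum_Ioc_split (f : ℤ → H) {a b c : ℤ} (h1 : a ≤ b) (h2 : b ≤ c) :
    ∑ m ∈ Ioc a c, f m = ∑ m ∈ Ioc a b, f m + ∑ m ∈ Ioc b c, f m := by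
  rw [← Finset.Ioc_union_Ioc_eq_Ioc h1 h2, Finset.sum_union]
  rw [Finset.disjoint_left]
  intro x hx hx'
  simp only [Finset.mem_Ioc] at hx hx'
  omega

lemma sum_Ioc_top (f : ℤ → H) {a b : ℤ} (h1 : a ≤ b) :
    ∑ m ∈ Ioc a (b + 1), f m = ∑ m ∈ Ioc a b, f m + f (b + 1) := by
  rw [sum_Ioc_split f h1 (by omega)]
  congr 1
  have : Finset.Ioc b (b+1) = {b+1} := by
    ext x; simp only [Finset.mem_Ioc, Finset.mem_singleton]; omega
  rw [this, Finset.sum_singleton]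

/-- Shifting a sum over `Ioc` in `ℤ`. -/
lemma sum_shift (f : ℤ → H) (a b s : ℤ) :
    ∑ m ∈ Ioc (a + s) (b + s), f m = ∑ m ∈ Ioc a b, f (m + s) := by
  rw [← Finset.map_add_right_Ioc, Finset.sum_map]
  rfl

lemma gauss1 : ∀ M : ℤ, 0 ≤ M → ∑ m ∈ Ioc (0:ℤ) M, (m:ℂ) = M * (M+1) / 2 := by
  refine Int.le_induction ?_ ?_
  · simp
  · intro M hM ih
    rw [sum_Ioc_top _ hM, ih]
    push_cast
    ring

lemma gauss2 : ∀ M : ℤ, 0 ≤ M → ∑ m ∈ Ioc (0:ℤ) M, (m:ℂ)^2 = M * (M+1) * (2*M+1) / 6 := by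
  refine Int.le_induction ?_ ?_
  · simp
  · intro M hM ih
    rw [sum_Ioc_top _ hM, ih]
    push_cast
    ring

/-- Constant sums over `Ioc` in `ℤ`, with `ℂ`-scalar. -/
lemma sum_Ioc_const (C : H) {a b : ℤ} (hab : a ≤ b) :
    ∑ _m ∈ Ioc a b, C = ((b - a : ℤ) : ℂ) • C := by
  rw [Finset.sum_const, Int.card_Ioc]
  rw [← Nat.cast_smul_eq_nsmul ℂ]
  congr 1
  have : ((b - a).toNat : ℤ) = b - a := Int.toNat_of_nonneg (by omega)
  exact_mod_cast congrArg (Int.cast : ℤ → ℂ) this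


lemma sug_add
    (hlinear : ∀ m : ℤ, IsLinearMap ℂ fun X : g => ρ X m)
    (hsmooth : ∀ (X : g) (v : H), ∃ N : ℤ, ∀ m : ℤ, N ≤ m → ρ X m v = 0)
    (c : ℂ) (n : ℤ) (v w : H) :
    sugawara ρ (fun a => J a) c n (v + w)
      = sugawara ρ (fun a => J a) c n v + sugawara ρ (fun a => J a) c n w := by
  obtain ⟨N₁, hN₁, hNv⟩ := bound J ρ hlinear hsmooth v
  obtain ⟨N₂, hN₂, hNw⟩ := bound J ρ hlinear hsmooth w
  have hv : ∀ (X : g) (m : ℤ), max N₁ N₂ ≤ m → ρ X m v = 0 :=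
    fun X m hm => hNv X m (le_trans (le_max_left _ _) hm)
  have hw : ∀ (X : g) (m : ℤ), max N₁ N₂ ≤ m → ρ X m w = 0 :=
    fun X m hm => hNw X m (le_trans (le_max_right _ _) hm)
  have hvw : ∀ (X : g) (m : ℤ), max N₁ N₂ ≤ m → ρ X m (v + w) = 0 := by
    intro X m hm
    rw [map_add, hv X m hm, hw X m hm, add_zero]
  have hM1 : max N₁ N₂ ≤ max N₁ N₂ + |n| := by
    have := abs_nonneg n; omega
  have hM2 : -(max N₁ N₂ + |n|) ≤ n - max N₁ N₂ := by
    have := neg_abs_le n; omega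
  unfold sugawara
  rw [sug_sum_eq J ρ hvw hM1 hM2, sug_sum_eq J ρ hv hM1 hM2, sug_sum_eq J ρ hw hM1 hM2,
    ← smul_add, ← Finset.sum_add_distrib]
  congr 1
  apply Finset.sum_congr rfl
  intro m _
  rw [← Finset.sum_add_distrib]
  apply Finset.sum_congr rfl
  intro a _
  exact NOterm_add J ρ a m n v w

lemma sug_smul
    (hlinear : ∀ m : ℤ, IsLinearMap ℂ fun X : g => ρ X m)
    (hsmooth : ∀ (X : g) (v : H), ∃ N : ℤ, ∀ m : ℤ, N ≤ m → ρ X m v = 0)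
    (c : ℂ) (n : ℤ) (s : ℂ) (v : H) :
    sugawara ρ (fun a => J a) c n (s • v) = s • sugawara ρ (fun a => J a) c n v := by
  obtain ⟨N₁, hN₁, hNv⟩ := bound J ρ hlinear hsmooth v
  have hsv : ∀ (X : g) (m : ℤ), N₁ ≤ m → ρ X m (s • v) = 0 := by
    intro X m hm
    rw [map_smul, hNv X m hm, smul_zero]
  have hM1 : N₁ ≤ N₁ + |n| := by have := abs_nonneg n; omega
  have hM2 : -(N₁ + |n|) ≤ n - N₁ := by have := neg_abs_le n; omega
  unfold sugawara
  rw [sug_sum_eq J ρ hsv hM1 hM2, sug_sum_eq J ρ hNv hM1 hM2]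
  have hs : ∑ m ∈ Ioc (-(N₁ + |n|)) (N₁ + |n|), ∑ a : Fin d,
        NOterm ρ (fun a => J a) a m n (s • v)
      = s • ∑ m ∈ Ioc (-(N₁ + |n|)) (N₁ + |n|), ∑ a : Fin d,
        NOterm ρ (fun a => J a) a m n v := by
    rw [Finset.smul_sum]
    apply Finset.sum_congr rfl
    intro m _
    rw [Finset.smul_sum]
    apply Finset.sum_congr rfl
    intro a _
    exact NOterm_smul J ρ a m n s v
  rw [hs, smul_comm]

/-- The Sugawara operator as a linear map. -/
noncomputable def sugL
    (hlinear : ∀ m : ℤ, IsLinearMap ℂ fun X : g => ρ X m)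
    (hsmooth : ∀ (X : g) (v : H), ∃ N : ℤ, ∀ m : ℤ, N ≤ m → ρ X m v = 0)
    (c : ℂ) (n : ℤ) : H →ₗ[ℂ] H where
  toFun := sugawara ρ (fun a => J a) c n
  map_add' := sug_add J ρ hlinear hsmooth c n
  map_smul' := sug_smul J ρ hlinear hsmooth c n

@[simp] lemma sugL_apply
    (hlinear : ∀ m : ℤ, IsLinearMap ℂ fun X : g => ρ X m)
    (hsmooth : ∀ (X : g) (v : H), ∃ N : ℤ, ∀ m : ℤ, N ≤ m → ρ X m v = 0)
    (c : ℂ) (n : ℤ) (v : H) :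
    sugL J ρ hlinear hsmooth c n v = sugawara ρ (fun a => J a) c n v := rfl

lemma rho_smul_apply (hlinear : ∀ m : ℤ, IsLinearMap ℂ fun X : g => ρ X m)
    (s : ℂ) (X : g) (r : ℤ) (y : H) : ρ (s • X) r y = s • ρ X r y := by
  rw [(hlinear r).map_smul]
  rfl

lemma rho_sum_apply (hlinear : ∀ m : ℤ, IsLinearMap ℂ fun X : g => ρ X m)
    {ι : Type*} (s : Finset ι) (Y : ι → g) (r : ℤ) (y : H) :
    ρ (∑ c ∈ s, Y c) r y = ∑ c ∈ s, ρ (Y c) r y := by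
  have hL : ∀ Z : g, ρ Z r = IsLinearMap.mk' (fun X : g => ρ X r) (hlinear r) Z :=
    fun _ => rfl
  rw [hL, map_sum, LinearMap.sum_apply]
  exact Finset.sum_congr rfl fun c _ => by rw [← hL]

lemma rho_lincomb (hlinear : ∀ m : ℤ, IsLinearMap ℂ fun X : g => ρ X m)
    {ι : Type*} (s : Finset ι) (t : ι → ℂ) (Y : ι → g) (r : ℤ) (y : H) :
    ρ (∑ c ∈ s, t c • Y c) r y = ∑ c ∈ s, t c • ρ (Y c) r y := by
  rw [rho_sum_apply ρ hlinear]
  exact Finset.sum_congr rfl fun c _ => rho_smul_apply ρ hlinear _ _ _ _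

lemma kappa_bracket_self (hsymm : ∀ X Y : g, κ X Y = κ Y X)
    (hinv : ∀ X Y Z : g, κ ⁅X, Y⁆ Z = κ X ⁅Y, Z⁆) (X Y : g) :
    κ ⁅X, Y⁆ X = 0 := by
  have h5 := antisym κ hsymm hinv X Y X
  have : (2:ℂ) * κ ⁅X, Y⁆ X = 0 := by rw [two_mul]; nth_rewrite 1 [h5]; ring
  exact (mul_eq_zero.mp this).resolve_left two_ne_zero

lemma sub_helper (a b c e : H) (h5 : c + b = a + e) : a - b = c - e := by
  calc a - b = (a + e) - (b + e) := by abel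
    _ = (c + b) - (b + e) := by rw [h5]
    _ = c - e := by abel

/-- Telescoping window difference. -/
lemma windowDiff (f : ℤ → H) (C : H) (B T k M : ℤ)
    (hbot : ∀ m : ℤ, m ≤ B → f m = 0) (htop : ∀ m : ℤ, T ≤ m → f m = C)
    (h0M : 0 ≤ M) (hT1 : T ≤ M + 1) (hT2 : T ≤ M + k + 1)
    (hB1 : -M + k ≤ B) (hB2 : -M ≤ B) :
    ∑ m ∈ Ioc (-M) M, f m - ∑ m ∈ Ioc (-M + k) (M + k), f m = ((-k : ℤ) : ℂ) • C := by
  rcases le_or_gt 0 k with hk | hk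
  · have h1 : ∑ m ∈ Ioc (-M) (M + k), f m
        = ∑ m ∈ Ioc (-M) (-M + k), f m + ∑ m ∈ Ioc (-M + k) (M + k), f m :=
      sum_Ioc_split f (by omega) (by omega)
    have h2 : ∑ m ∈ Ioc (-M) (M + k), f m
        = ∑ m ∈ Ioc (-M) M, f m + ∑ m ∈ Ioc M (M + k), f m :=
      sum_Ioc_split f (by omega) (by omega)
    have h3 : ∑ m ∈ Ioc (-M) M, f m - ∑ m ∈ Ioc (-M + k) (M + k), f m
        = ∑ m ∈ Ioc (-M) (-M + k), f m - ∑ m ∈ Ioc M (M + k), f m := by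
      apply sub_helper
      rw [← h1, ← h2]
    rw [h3]
    have hb : ∑ m ∈ Ioc (-M) (-M + k), f m = 0 := by
      apply Finset.sum_eq_zero
      intro m hm
      rw [Finset.mem_Ioc] at hm
      exact hbot m (by omega)
    have ht : ∑ m ∈ Ioc M (M + k), f m = ((k : ℤ) : ℂ) • C := by
      rw [Finset.sum_congr rfl fun m hm => htop m (by rw [Finset.mem_Ioc] at hm; omega)]
      rw [sum_Ioc_const C (by omega)]
      norm_num
    rw [hb, ht, zero_sub, ← neg_smul]
    norm_num
  · have h1 : ∑ m ∈ Ioc (-M + k) M, f m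
        = ∑ m ∈ Ioc (-M + k) (-M), f m + ∑ m ∈ Ioc (-M) M, f m :=
      sum_Ioc_split f (by omega) (by omega)
    have h2 : ∑ m ∈ Ioc (-M + k) M, f m
        = ∑ m ∈ Ioc (-M + k) (M + k), f m + ∑ m ∈ Ioc (M + k) M, f m :=
      sum_Ioc_split f (by omega) (by omega)
    have h3 : ∑ m ∈ Ioc (-M) M, f m - ∑ m ∈ Ioc (-M + k) (M + k), f m
        = ∑ m ∈ Ioc (M + k) M, f m - ∑ m ∈ Ioc (-M + k) (-M), f m := by
      apply sub_helper
      have h12 : ∑ m ∈ Ioc (-M + k) (-M), f m + ∑ m ∈ Ioc (-M) M, f m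
          = ∑ m ∈ Ioc (-M + k) (M + k), f m + ∑ m ∈ Ioc (M + k) M, f m := by
        rw [← h1, ← h2]
      calc ∑ m ∈ Ioc (M + k) M, f m + ∑ m ∈ Ioc (-M + k) (M + k), f m
          = ∑ m ∈ Ioc (-M + k) (M + k), f m + ∑ m ∈ Ioc (M + k) M, f m := by abel
        _ = ∑ m ∈ Ioc (-M + k) (-M), f m + ∑ m ∈ Ioc (-M) M, f m := h12.symm
        _ = ∑ m ∈ Ioc (-M) M, f m + ∑ m ∈ Ioc (-M + k) (-M), f m := by abel
    rw [h3]
    have hb : ∑ m ∈ Ioc (-M + k) (-M), f m = 0 := by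
      apply Finset.sum_eq_zero
      intro m hm
      rw [Finset.mem_Ioc] at hm
      exact hbot m (by omega)
    have ht : ∑ m ∈ Ioc (M + k) M, f m = ((-k : ℤ) : ℂ) • C := by
      rw [Finset.sum_congr rfl fun m hm => htop m (by rw [Finset.mem_Ioc] at hm; omega)]
      rw [sum_Ioc_const C (by omega)]
      norm_num
    rw [hb, ht, sub_zero]

lemma termA
    (hON : ∀ a b : Fin d, κ (J a) (J b) = if a = b then 1 else 0)
    (hlinear : ∀ m : ℤ, IsLinearMap ℂ fun X : g => ρ X m)
    (hcomm : ∀ (X Y : g) (m k : ℤ),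
      ρ X m * ρ Y k - ρ Y k * ρ X m
        = ρ ⁅X, Y⁆ (m + k)
          + (if m + k = 0 then (m : ℂ) * κ X Y * ℓ else 0) • (1 : Module.End ℂ H))
    (a b : Fin d) (m n k : ℤ) (v : H) :
    NOterm ρ (fun a => J a) a m n (ρ (J b) k v)
      - ρ (J b) k (NOterm ρ (fun a => J a) a m n v)
      = ρ (J a) m (ρ ⁅J a, J b⁆ (n + k - m) v)
        + ρ ⁅J a, J b⁆ (m + k) (ρ (J a) (n - m) v)
        + (if a = b then (if m = n + k then (((n - m) : ℂ) * ℓ) • ρ (J a) m v else 0) else 0)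
        + (if a = b then (if m = -k then ((m : ℂ) * ℓ) • ρ (J a) (n - m) v else 0) else 0) := by
  rw [NOterm_eq κ J ℓ ρ hON hlinear hcomm a m n (ρ (J b) k v),
      NOterm_eq κ J ℓ ρ hON hlinear hcomm a m n v, map_sub, map_smul]
  have hcancel : ∀ x y : H,
      x - (if n = 0 ∧ ¬m ≤ n - m then (m : ℂ) * ℓ else 0) • ρ (J b) k v
        - (y - (if n = 0 ∧ ¬m ≤ n - m then (m : ℂ) * ℓ else 0) • ρ (J b) k v)
      = x - y := fun x y => by abel
  rw [hcancel]
  -- now pure commutator computation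
  have e1 := comm_v κ ℓ ρ hcomm (J a) (J b) (n - m) k v
  have e2 := comm_v κ ℓ ρ hcomm (J a) (J b) m k (ρ (J a) (n - m) v)
  have E1 : ρ (J a) (n - m) (ρ (J b) k v)
      = ρ (J b) k (ρ (J a) (n - m) v)
        + (ρ ⁅J a, J b⁆ (n - m + k) v
          + (if n - m + k = 0 then ((n - m : ℤ) : ℂ) * κ (J a) (J b) * ℓ else 0) • v) := by
    rw [← e1]; abel
  have E2 : ρ (J a) m (ρ (J b) k (ρ (J a) (n - m) v))
      = ρ (J b) k (ρ (J a) m (ρ (J a) (n - m) v))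
        + (ρ ⁅J a, J b⁆ (m + k) (ρ (J a) (n - m) v)
          + (if m + k = 0 then (m : ℂ) * κ (J a) (J b) * ℓ else 0) • ρ (J a) (n - m) v) := by
    rw [← e2]; abel
  rw [E1, map_add, map_add, map_smul, E2]
  have hix : n - m + k = n + k - m := by ring
  rw [hix]
  have hs1 : (if n + k - m = 0 then ((n - m : ℤ) : ℂ) * κ (J a) (J b) * ℓ else 0) • ρ (J a) m v
      = (if a = b then (if m = n + k then (((n - m) : ℂ) * ℓ) • ρ (J a) m v else 0) else 0) := by
    rw [hON]
    by_cases hab : a = b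
    · simp only [if_pos hab, mul_one]
      by_cases hmk : m = n + k
      · rw [if_pos (by omega), if_pos hmk]
        congr 1
        push_cast
        ring
      · rw [if_neg (by omega), if_neg hmk, zero_smul]
    · simp [hab]
  have hs2 : (if m + k = 0 then (m : ℂ) * κ (J a) (J b) * ℓ else 0) • ρ (J a) (n - m) v
      = (if a = b then (if m = -k then ((m : ℂ) * ℓ) • ρ (J a) (n - m) v else 0) else 0) := by
    rw [hON]
    by_cases hab : a = b
    · simp only [if_pos hab, mul_one]
      by_cases hmk : m = -k
      · rw [if_pos (by omega), if_pos hmk]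
      · rw [if_neg (by omega), if_neg hmk, zero_smul]
    · simp [hab]
  rw [hs1, hs2]
  abel

lemma lie_sum' (x : g) {ι : Type*} (s : Finset ι) (f : ι → g) :
    ⁅x, ∑ i ∈ s, f i⁆ = ∑ i ∈ s, ⁅x, f i⁆ := by
  induction s using Finset.cons_induction with
  | empty => simp
  | cons i s his ih => rw [Finset.sum_cons, Finset.sum_cons, lie_add, ih]

lemma stepA
    (hsymm : ∀ X Y : g, κ X Y = κ Y X)
    (hinv : ∀ X Y Z : g, κ ⁅X, Y⁆ Z = κ X ⁅Y, Z⁆)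
    (hON : ∀ a b : Fin d, κ (J a) (J b) = if a = b then 1 else 0)
    (hlinear : ∀ m : ℤ, IsLinearMap ℂ fun X : g => ρ X m)
    (hcomm : ∀ (X Y : g) (m k : ℤ),
      ρ X m * ρ Y k - ρ Y k * ρ X m
        = ρ ⁅X, Y⁆ (m + k)
          + (if m + k = 0 then (m : ℂ) * κ X Y * ℓ else 0) • (1 : Module.End ℂ H))
    (hsmooth : ∀ (X : g) (v : H), ∃ N : ℤ, ∀ m : ℤ, N ≤ m → ρ X m v = 0)
    (hCox : ∀ X : g, ∑ a : Fin d, ⁅J a, ⁅J a, X⁆⁆ = (2 * h) • X)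
    (n k : ℤ) (b : Fin d) (v : H) :
    (∑ᶠ m : ℤ, ∑ a, NOterm ρ (fun a => J a) a m n (ρ (J b) k v))
      - ρ (J b) k (∑ᶠ m : ℤ, ∑ a, NOterm ρ (fun a => J a) a m n v)
    = (-(2 * (ℓ + h) * (k : ℂ))) • ρ (J b) (n + k) v := by
  obtain ⟨N₀, hN₀1, hNv⟩ := bound J ρ hlinear hsmooth v
  obtain ⟨N₁, hN₁1, hNw⟩ := bound J ρ hlinear hsmooth (ρ (J b) k v)
  have hv : ∀ (X : g) (m : ℤ), max N₀ N₁ ≤ m → ρ X m v = 0 :=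
    fun X m hm => hNv X m (le_trans (le_max_left _ _) hm)
  have hw : ∀ (X : g) (m : ℤ), max N₀ N₁ ≤ m → ρ X m (ρ (J b) k v) = 0 :=
    fun X m hm => hNw X m (le_trans (le_max_right _ _) hm)
  set N := max N₀ N₁ with hNdef
  have hN1 : 1 ≤ N := le_trans hN₀1 (le_max_left _ _)
  obtain ⟨an, han0, han1, han2⟩ : ∃ A : ℤ, 0 ≤ A ∧ -A ≤ n ∧ n ≤ A :=
    ⟨|n|, abs_nonneg n, neg_abs_le n, le_abs_self n⟩
  obtain ⟨ak, hak0, hak1, hak2⟩ : ∃ A : ℤ, 0 ≤ A ∧ -A ≤ k ∧ k ≤ A :=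
    ⟨|k|, abs_nonneg k, neg_abs_le k, le_abs_self k⟩
  obtain ⟨ank, hank0, hank1, hank2⟩ : ∃ A : ℤ, 0 ≤ A ∧ -A ≤ n + k ∧ n + k ≤ A :=
    ⟨|n + k|, abs_nonneg _, neg_abs_le _, le_abs_self _⟩
  set M := N + an + ak + ank + 1 with hMdef
  have hM1 : N ≤ M := by omega
  have hM2 : -M ≤ n - N := by omega
  have key : (∑ᶠ m : ℤ, ∑ a, NOterm ρ (fun a => J a) a m n (ρ (J b) k v))
      - ρ (J b) k (∑ᶠ m : ℤ, ∑ a, NOterm ρ (fun a => J a) a m n v)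
      = ∑ m ∈ Ioc (-M) M, ∑ a, (NOterm ρ (fun a => J a) a m n (ρ (J b) k v)
          - ρ (J b) k (NOterm ρ (fun a => J a) a m n v)) := by
    rw [sug_sum_eq J ρ hw hM1 hM2, sug_sum_eq J ρ hv hM1 hM2, map_sum,
      ← Finset.sum_sub_distrib]
    exact Finset.sum_congr rfl fun m _ => by rw [map_sum, ← Finset.sum_sub_distrib]
  rw [key, Finset.sum_congr rfl fun m _ => Finset.sum_congr rfl fun a _ =>
    termA κ J ℓ ρ hON hlinear hcomm a b m n k v]
  simp only [Finset.sum_add_distrib]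
  -- the four pieces
  set F : ℤ → H := fun m => ∑ a, ∑ c, κ ⁅J a, J b⁆ (J c) • ρ (J a) m (ρ (J c) (n + k - m) v)
    with hF
  have hP1 : ∑ m ∈ Ioc (-M) M, ∑ a, ρ (J a) m (ρ ⁅J a, J b⁆ (n + k - m) v)
      = ∑ m ∈ Ioc (-M) M, F m := by
    apply Finset.sum_congr rfl
    intro m _
    rw [hF]
    apply Finset.sum_congr rfl
    intro a _
    rw [rho_expand κ J ρ hlinear hON ⁅J a, J b⁆ (n + k - m) v, map_sum]
    exact Finset.sum_congr rfl fun c _ => by rw [map_smul]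
  have hP2 : ∑ m ∈ Ioc (-M) M, ∑ a, ρ ⁅J a, J b⁆ (m + k) (ρ (J a) (n - m) v)
      = - ∑ m ∈ Ioc (-M + k) (M + k), F m := by
    have h1 : ∀ m : ℤ, ∑ a, ρ ⁅J a, J b⁆ (m + k) (ρ (J a) (n - m) v) = - F (m + k) := by
      intro m
      calc ∑ a, ρ ⁅J a, J b⁆ (m + k) (ρ (J a) (n - m) v)
          = ∑ a, ∑ c, κ ⁅J a, J b⁆ (J c) • ρ (J c) (m + k) (ρ (J a) (n - m) v) :=
            Finset.sum_congr rfl fun a _ =>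
              rho_expand κ J ρ hlinear hON ⁅J a, J b⁆ (m + k) (ρ (J a) (n - m) v)
        _ = ∑ c, ∑ a, κ ⁅J a, J b⁆ (J c) • ρ (J c) (m + k) (ρ (J a) (n - m) v) :=
            Finset.sum_comm
        _ = ∑ a, ∑ c, -(κ ⁅J a, J b⁆ (J c) • ρ (J a) (m + k) (ρ (J c) (n - m) v)) := by
            apply Finset.sum_congr rfl; intro a _
            apply Finset.sum_congr rfl; intro c _
            rw [antisym κ hsymm hinv (J a) (J b) (J c), neg_smul]
        _ = - F (m + k) := by
            rw [hF]
            simp only [show n + k - (m + k) = n - m from by ring, ← Finset.sum_neg_distrib]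
    rw [Finset.sum_congr rfl fun m _ => h1 m, Finset.sum_neg_distrib,
      ← sum_shift F (-M) M k]
  have hbot : ∀ m : ℤ, m ≤ n + k - N → F m = 0 := by
    intro m hm
    rw [hF]
    apply Finset.sum_eq_zero; intro a _
    apply Finset.sum_eq_zero; intro c _
    rw [hv (J c) (n + k - m) (by omega), map_zero, smul_zero]
  have htop : ∀ m : ℤ, N ≤ m → F m = (2 * h) • ρ (J b) (n + k) v := by
    intro m hm
    have hterm : ∀ a c : Fin d, ρ (J a) m (ρ (J c) (n + k - m) v)
        = ρ ⁅J a, J c⁆ (n + k) v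
          + (if n + k = 0 then (m : ℂ) * κ (J a) (J c) * ℓ else 0) • v := by
      intro a c
      have e := comm_v κ ℓ ρ hcomm (J a) (J c) m (n + k - m) v
      rw [show m + (n + k - m) = n + k from by ring] at e
      rw [hv (J a) m hm, map_zero, sub_zero] at e
      exact e
    rw [hF]
    calc ∑ a, ∑ c, κ ⁅J a, J b⁆ (J c) • ρ (J a) m (ρ (J c) (n + k - m) v)
        = ∑ a, ∑ c, (κ ⁅J a, J b⁆ (J c) • ρ ⁅J a, J c⁆ (n + k) v
            + κ ⁅J a, J b⁆ (J c)
              • ((if n + k = 0 then (m : ℂ) * κ (J a) (J c) * ℓ else 0) • v)) := by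
          apply Finset.sum_congr rfl; intro a _
          apply Finset.sum_congr rfl; intro c _
          rw [hterm a c, smul_add]
      _ = (∑ a, ∑ c, κ ⁅J a, J b⁆ (J c) • ρ ⁅J a, J c⁆ (n + k) v)
          + ∑ a, ∑ c, κ ⁅J a, J b⁆ (J c)
              • ((if n + k = 0 then (m : ℂ) * κ (J a) (J c) * ℓ else 0) • v) := by
          simp only [Finset.sum_add_distrib]
      _ = (∑ a, ∑ c, κ ⁅J a, J b⁆ (J c) • ρ ⁅J a, J c⁆ (n + k) v) + 0 := by
          congr 1
          apply Finset.sum_eq_zero; intro a _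
          apply Finset.sum_eq_zero; intro c _
          by_cases hac : a = c
          · rw [← hac, kappa_bracket_self κ hsymm hinv (J a) (J b), zero_smul]
          · rw [hON, if_neg hac]
            simp
      _ = (2 * h) • ρ (J b) (n + k) v := by
          rw [add_zero]
          have hper : ∀ a : Fin d, ∑ c, κ ⁅J a, J b⁆ (J c) • ρ ⁅J a, J c⁆ (n + k) v
              = ρ ⁅J a, ⁅J a, J b⁆⁆ (n + k) v := by
            intro a
            have hX : ⁅J a, ⁅J a, J b⁆⁆ = ∑ c, κ ⁅J a, J b⁆ (J c) • ⁅J a, J c⁆ := by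
              conv_lhs => rw [← expand κ J hON ⁅J a, J b⁆]
              rw [lie_sum']
              exact Finset.sum_congr rfl fun c _ => by rw [lie_smul]
            rw [hX, rho_lincomb ρ hlinear]
          rw [Finset.sum_congr rfl fun a _ => hper a,
            ← rho_sum_apply ρ hlinear Finset.univ (fun a => ⁅J a, ⁅J a, J b⁆⁆) (n + k) v,
            hCox (J b), rho_smul_apply ρ hlinear]
  have hwd := windowDiff F ((2 * h) • ρ (J b) (n + k) v) (n + k - N) N k M hbot htop
    (by omega) (by omega) (by omega) (by omega) (by omega)
  have hP3 : ∑ m ∈ Ioc (-M) M, ∑ a,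
        (if a = b then (if m = n + k then (((n - m) : ℂ) * ℓ) • ρ (J a) m v else 0) else 0)
      = ((-(k : ℂ)) * ℓ) • ρ (J b) (n + k) v := by
    have hin : ∀ m ∈ Ioc (-M) M, (∑ a, (if a = b then
          (if m = n + k then (((n - m) : ℂ) * ℓ) • ρ (J a) m v else 0) else 0))
        = (if m = n + k then (((n - m) : ℂ) * ℓ) • ρ (J b) m v else 0) := by
      intro m _
      rw [Finset.sum_ite_eq' Finset.univ b
        (fun a => if m = n + k then (((n - m) : ℂ) * ℓ) • ρ (J a) m v else 0)]
      simp
    rw [Finset.sum_congr rfl hin,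
      Finset.sum_ite_eq' (Ioc (-M) M) (n + k)
        (fun m => (((n - m) : ℂ) * ℓ) • ρ (J b) m v),
      if_pos (Finset.mem_Ioc.mpr ⟨by omega, by omega⟩)]
    congr 1
    push_cast
    ring
  have hP4 : ∑ m ∈ Ioc (-M) M, ∑ a,
        (if a = b then (if m = -k then ((m : ℂ) * ℓ) • ρ (J a) (n - m) v else 0) else 0)
      = ((-(k : ℂ)) * ℓ) • ρ (J b) (n + k) v := by
    have hin : ∀ m ∈ Ioc (-M) M, (∑ a, (if a = b then
          (if m = -k then ((m : ℂ) * ℓ) • ρ (J a) (n - m) v else 0) else 0))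
        = (if m = -k then ((m : ℂ) * ℓ) • ρ (J b) (n - m) v else 0) := by
      intro m _
      rw [Finset.sum_ite_eq' Finset.univ b
        (fun a => if m = -k then ((m : ℂ) * ℓ) • ρ (J a) (n - m) v else 0)]
      simp
    rw [Finset.sum_congr rfl hin,
      Finset.sum_ite_eq' (Ioc (-M) M) (-k)
        (fun m => ((m : ℂ) * ℓ) • ρ (J b) (n - m) v),
      if_pos (Finset.mem_Ioc.mpr ⟨by omega, by omega⟩),
      show n - -k = n + k from by ring]
    congr 1
    push_cast
    ring
  rw [hP1, hP2, hP3, hP4]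
  have hcomb : ∑ m ∈ Ioc (-M) M, F m + -∑ m ∈ Ioc (-M + k) (M + k), F m
      = ((-k : ℤ) : ℂ) • ((2 * h) • ρ (J b) (n + k) v) := by
    rw [← sub_eq_add_neg, hwd]
  rw [hcomb, smul_smul, ← add_smul, ← add_smul]
  congr 1
  push_cast
  ring

lemma stepA' (hlev : ℓ + h ≠ 0)
    (hsymm : ∀ X Y : g, κ X Y = κ Y X)
    (hinv : ∀ X Y Z : g, κ ⁅X, Y⁆ Z = κ X ⁅Y, Z⁆)
    (hON : ∀ a b : Fin d, κ (J a) (J b) = if a = b then 1 else 0)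
    (hlinear : ∀ m : ℤ, IsLinearMap ℂ fun X : g => ρ X m)
    (hcomm : ∀ (X Y : g) (m k : ℤ),
      ρ X m * ρ Y k - ρ Y k * ρ X m
        = ρ ⁅X, Y⁆ (m + k)
          + (if m + k = 0 then (m : ℂ) * κ X Y * ℓ else 0) • (1 : Module.End ℂ H))
    (hsmooth : ∀ (X : g) (v : H), ∃ N : ℤ, ∀ m : ℤ, N ≤ m → ρ X m v = 0)
    (hCox : ∀ X : g, ∑ a : Fin d, ⁅J a, ⁅J a, X⁆⁆ = (2 * h) • X)
    (q k : ℤ) (b : Fin d) (v : H) :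
    ρ (J b) k (sugawara ρ (fun a => J a) (2 * (ℓ + h))⁻¹ q v)
      = sugawara ρ (fun a => J a) (2 * (ℓ + h))⁻¹ q (ρ (J b) k v)
        + (k : ℂ) • ρ (J b) (q + k) v := by
  have hA := stepA κ J ℓ h ρ hsymm hinv hON hlinear hcomm hsmooth hCox q k b v
  have h2lh : (2 : ℂ) * (ℓ + h) ≠ 0 := mul_ne_zero two_ne_zero hlev
  unfold sugawara
  rw [map_smul]
  have h2 : ρ (J b) k (∑ᶠ m : ℤ, ∑ a, NOterm ρ (fun a => J a) a m q v)
      = (∑ᶠ m : ℤ, ∑ a, NOterm ρ (fun a => J a) a m q (ρ (J b) k v))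
        - (-(2 * (ℓ + h) * (k : ℂ))) • ρ (J b) (q + k) v := by
    rw [← hA]; abel
  rw [h2, smul_sub, neg_smul, smul_neg, sub_neg_eq_add, smul_smul]
  congr 2
  rw [show (2 * (ℓ + h)) * (k:ℂ) = (2 * (ℓ + h)) * (k:ℂ) from rfl, ← mul_assoc,
    inv_mul_cancel₀ h2lh, one_mul]

lemma windowDiffGen (f : ℤ → H) (B k M : ℤ)
    (hbot : ∀ m : ℤ, m ≤ B → f m = 0)
    (h0M : 0 ≤ M) (hkM : -M ≤ M + k)
    (hB1 : -M + k ≤ B) (hB2 : -M ≤ B) :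
    ∑ m ∈ Ioc (-M + k) (M + k), f m - ∑ m ∈ Ioc (-M) M, f m
      = if 0 ≤ k then ∑ m ∈ Ioc M (M + k), f m else - ∑ m ∈ Ioc (M + k) M, f m := by
  rcases le_or_gt 0 k with hk | hk
  · rw [if_pos hk]
    have h1 : ∑ m ∈ Ioc (-M) (M + k), f m
        = ∑ m ∈ Ioc (-M) (-M + k), f m + ∑ m ∈ Ioc (-M + k) (M + k), f m :=
      sum_Ioc_split f (by omega) (by omega)
    have h2 : ∑ m ∈ Ioc (-M) (M + k), f m
        = ∑ m ∈ Ioc (-M) M, f m + ∑ m ∈ Ioc M (M + k), f m :=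
      sum_Ioc_split f (by omega) (by omega)
    have hb : ∑ m ∈ Ioc (-M) (-M + k), f m = 0 :=
      Finset.sum_eq_zero fun m hm => hbot m (by rw [Finset.mem_Ioc] at hm; omega)
    have h3 : ∑ m ∈ Ioc (-M + k) (M + k), f m - ∑ m ∈ Ioc (-M) M, f m
        = ∑ m ∈ Ioc M (M + k), f m - ∑ m ∈ Ioc (-M) (-M + k), f m := by
      apply sub_helper
      calc ∑ m ∈ Ioc M (M + k), f m + ∑ m ∈ Ioc (-M) M, f m
          = ∑ m ∈ Ioc (-M) M, f m + ∑ m ∈ Ioc M (M + k), f m := by abel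
        _ = ∑ m ∈ Ioc (-M) (M + k), f m := h2.symm
        _ = ∑ m ∈ Ioc (-M) (-M + k), f m + ∑ m ∈ Ioc (-M + k) (M + k), f m := h1
        _ = ∑ m ∈ Ioc (-M + k) (M + k), f m + ∑ m ∈ Ioc (-M) (-M + k), f m := by abel
    rw [h3, hb, sub_zero]
  · rw [if_neg (by omega)]
    have h1 : ∑ m ∈ Ioc (-M + k) M, f m
        = ∑ m ∈ Ioc (-M + k) (-M), f m + ∑ m ∈ Ioc (-M) M, f m :=
      sum_Ioc_split f (by omega) (by omega)
    have h2 : ∑ m ∈ Ioc (-M + k) M, f m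
        = ∑ m ∈ Ioc (-M + k) (M + k), f m + ∑ m ∈ Ioc (M + k) M, f m :=
      sum_Ioc_split f (by omega) (by omega)
    have hb : ∑ m ∈ Ioc (-M + k) (-M), f m = 0 :=
      Finset.sum_eq_zero fun m hm => hbot m (by rw [Finset.mem_Ioc] at hm; omega)
    have h3 : ∑ m ∈ Ioc (-M + k) (M + k), f m - ∑ m ∈ Ioc (-M) M, f m
        = ∑ m ∈ Ioc (-M + k) (-M), f m - ∑ m ∈ Ioc (M + k) M, f m := by
      apply sub_helper
      rw [← h1, h2]
    rw [h3, hb, zero_sub]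

lemma topwin_sum (q M : ℤ) (hM : 0 ≤ M) (hq : 0 ≤ M + q) :
    (if 0 ≤ q then ∑ m ∈ Ioc M (M + q), ((m : ℂ) ^ 2 - (q : ℂ) * (m : ℂ))
      else - ∑ m ∈ Ioc (M + q) M, ((m : ℂ) ^ 2 - (q : ℂ) * (m : ℂ)))
      = ((q : ℂ) - (q : ℂ) ^ 3) / 6 + (q : ℂ) * (M : ℂ) * ((M : ℂ) + 1) := by
  have e1 : ∀ A B : ℤ, 0 ≤ A → A ≤ B →
      ∑ m ∈ Ioc A B, ((m : ℂ) ^ 2 - (q : ℂ) * (m : ℂ))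
        = ((B : ℂ) * (B + 1) * (2 * B + 1) / 6 - (A : ℂ) * (A + 1) * (2 * A + 1) / 6)
          - (q : ℂ) * ((B : ℂ) * (B + 1) / 2 - (A : ℂ) * (A + 1) / 2) := by
    intro A B hA hAB
    have hsp : ∑ m ∈ Ioc (0 : ℤ) B, ((m : ℂ) ^ 2 - (q : ℂ) * (m : ℂ))
        = ∑ m ∈ Ioc (0 : ℤ) A, ((m : ℂ) ^ 2 - (q : ℂ) * (m : ℂ))
          + ∑ m ∈ Ioc A B, ((m : ℂ) ^ 2 - (q : ℂ) * (m : ℂ)) :=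
      sum_Ioc_split _ hA hAB
    have hval : ∀ C : ℤ, 0 ≤ C → ∑ m ∈ Ioc (0 : ℤ) C, ((m : ℂ) ^ 2 - (q : ℂ) * (m : ℂ))
        = (C : ℂ) * (C + 1) * (2 * C + 1) / 6 - (q : ℂ) * ((C : ℂ) * (C + 1) / 2) := by
      intro C hC
      rw [Finset.sum_sub_distrib, ← Finset.mul_sum, gauss1 C hC, gauss2 C hC]
    have := hsp
    rw [hval B (by omega), hval A hA] at this
    have h4 : ∑ m ∈ Ioc A B, ((m : ℂ) ^ 2 - (q : ℂ) * (m : ℂ))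
        = ((B : ℂ) * (B + 1) * (2 * B + 1) / 6 - (q : ℂ) * ((B : ℂ) * (B + 1) / 2))
          - ((A : ℂ) * (A + 1) * (2 * A + 1) / 6 - (q : ℂ) * ((A : ℂ) * (A + 1) / 2)) := by
      rw [eq_sub_iff_add_eq, this]
      ring
    rw [h4]; ring
  rcases le_or_gt 0 q with hq0 | hq0
  · rw [if_pos hq0, e1 M (M + q) hM (by omega)]
    push_cast
    ring
  · rw [if_neg (by omega), e1 (M + q) M hq (by omega)]
    push_cast
    ring

lemma termB (hlev : ℓ + h ≠ 0)
    (hsymm : ∀ X Y : g, κ X Y = κ Y X)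
    (hinv : ∀ X Y Z : g, κ ⁅X, Y⁆ Z = κ X ⁅Y, Z⁆)
    (hON : ∀ a b : Fin d, κ (J a) (J b) = if a = b then 1 else 0)
    (hlinear : ∀ m : ℤ, IsLinearMap ℂ fun X : g => ρ X m)
    (hcomm : ∀ (X Y : g) (m k : ℤ),
      ρ X m * ρ Y k - ρ Y k * ρ X m
        = ρ ⁅X, Y⁆ (m + k)
          + (if m + k = 0 then (m : ℂ) * κ X Y * ℓ else 0) • (1 : Module.End ℂ H))
    (hsmooth : ∀ (X : g) (v : H), ∃ N : ℤ, ∀ m : ℤ, N ≤ m → ρ X m v = 0)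
    (hCox : ∀ X : g, ∑ a : Fin d, ⁅J a, ⁅J a, X⁆⁆ = (2 * h) • X)
    (p q : ℤ) (a : Fin d) (m : ℤ) (v : H) :
    NOterm ρ (fun a => J a) a m p (sugawara ρ (fun a => J a) (2 * (ℓ + h))⁻¹ q v)
      - sugL J ρ hlinear hsmooth (2 * (ℓ + h))⁻¹ q (NOterm ρ (fun a => J a) a m p v)
    = ((p - m : ℤ) : ℂ) • ρ (J a) m (ρ (J a) (p + q - m) v)
      + ((m : ℤ) : ℂ) • ρ (J a) (m + q) (ρ (J a) (p - m) v) := by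
  have hLa : ∀ x : H, sugawara ρ (fun a => J a) (2 * (ℓ + h))⁻¹ q x
      = sugL J ρ hlinear hsmooth (2 * (ℓ + h))⁻¹ q x := fun _ => rfl
  rw [hLa]
  set L : H →ₗ[ℂ] H := sugL J ρ hlinear hsmooth (2 * (ℓ + h))⁻¹ q with hLdef
  rw [NOterm_eq κ J ℓ ρ hON hlinear hcomm a m p (L v),
    NOterm_eq κ J ℓ ρ hON hlinear hcomm a m p v, map_sub, map_smul,
    sub_sub_sub_cancel_right]
  have e1 : ρ (J a) (p - m) (L v)
      = L (ρ (J a) (p - m) v) + ((p - m : ℤ) : ℂ) • ρ (J a) (q + (p - m)) v := by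
    have := stepA' κ J ℓ h ρ hlev hsymm hinv hON hlinear hcomm hsmooth hCox q (p - m) a v
    rw [hLa, hLa] at this
    exact this
  have e2 : ρ (J a) m (L (ρ (J a) (p - m) v))
      = L (ρ (J a) m (ρ (J a) (p - m) v))
        + ((m : ℤ) : ℂ) • ρ (J a) (q + m) (ρ (J a) (p - m) v) := by
    have := stepA' κ J ℓ h ρ hlev hsymm hinv hON hlinear hcomm hsmooth hCox q m a
      (ρ (J a) (p - m) v)
    rw [hLa, hLa] at this
    exact this
  rw [e1, map_add, map_smul, e2,
    show q + (p - m) = p + q - m from by ring, show q + m = m + q from by ring]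
  abel

end SugAux

open Finset SugAux in
/-- The Virasoro relations for the Sugawara operators. -/
theorem sugawara_virasoro_relations {g H : Type*} [LieRing g] [LieAlgebra ℂ g]
    [AddCommGroup H] [Module ℂ H]
    (κ : LinearMap.BilinForm ℂ g)
    (hsymm : ∀ X Y : g, κ X Y = κ Y X)
    (hinv : ∀ X Y Z : g, κ ⁅X, Y⁆ Z = κ X ⁅Y, Z⁆)
    {d : ℕ} (J : Module.Basis (Fin d) ℂ g)
    (hON : ∀ a b : Fin d, κ (J a) (J b) = if a = b then 1 else 0)
    (ℓ h : ℂ) (hlev : ℓ + h ≠ 0)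
    (hCox : ∀ X : g, ∑ a : Fin d, ⁅J a, ⁅J a, X⁆⁆ = (2 * h) • X)
    (ρ : g → ℤ → Module.End ℂ H)
    (hlinear : ∀ m : ℤ, IsLinearMap ℂ fun X : g => ρ X m)
    (hcomm : ∀ (X Y : g) (m k : ℤ),
      ρ X m * ρ Y k - ρ Y k * ρ X m
        = ρ ⁅X, Y⁆ (m + k)
          + (if m + k = 0 then (m : ℂ) * κ X Y * ℓ else 0) • (1 : Module.End ℂ H))
    (hsmooth : ∀ (X : g) (v : H), ∃ N : ℤ, ∀ m : ℤ, N ≤ m → ρ X m v = 0) :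
    ∀ (p q : ℤ) (v : H),
      sugawara ρ (fun a => J a) (2 * (ℓ + h))⁻¹ p
          (sugawara ρ (fun a => J a) (2 * (ℓ + h))⁻¹ q v)
        - sugawara ρ (fun a => J a) (2 * (ℓ + h))⁻¹ q
            (sugawara ρ (fun a => J a) (2 * (ℓ + h))⁻¹ p v)
      = ((p : ℂ) - (q : ℂ)) • sugawara ρ (fun a => J a) (2 * (ℓ + h))⁻¹ (p + q) v
        + (if p + q = 0 then ℓ * (d : ℂ) / (ℓ + h) / 12 * ((p : ℂ) ^ 3 - (p : ℂ))
            else 0) • v := by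
  intro p q v
  have h2lh : (2 : ℂ) * (ℓ + h) ≠ 0 := mul_ne_zero two_ne_zero hlev
  set L : H →ₗ[ℂ] H := sugL J ρ hlinear hsmooth (2 * (ℓ + h))⁻¹ q with hLdef
  have hLa : ∀ x : H, sugawara ρ (fun a => J a) (2 * (ℓ + h))⁻¹ q x = L x := fun _ => rfl
  obtain ⟨N₀, hN₀1, hNv⟩ := bound J ρ hlinear hsmooth v
  obtain ⟨N₁, hN₁1, hNw⟩ := bound J ρ hlinear hsmooth (L v)
  have hv : ∀ (X : g) (m : ℤ), max N₀ N₁ ≤ m → ρ X m v = 0 :=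
    fun X m hm => hNv X m (le_trans (le_max_left _ _) hm)
  have hw : ∀ (X : g) (m : ℤ), max N₀ N₁ ≤ m → ρ X m (L v) = 0 :=
    fun X m hm => hNw X m (le_trans (le_max_right _ _) hm)
  set N := max N₀ N₁ with hNdef
  have hN1 : 1 ≤ N := le_trans hN₀1 (le_max_left _ _)
  obtain ⟨ap, hap0, hap1, hap2⟩ : ∃ A : ℤ, 0 ≤ A ∧ -A ≤ p ∧ p ≤ A :=
    ⟨|p|, abs_nonneg p, neg_abs_le p, le_abs_self p⟩
  obtain ⟨aq, haq0, haq1, haq2⟩ : ∃ A : ℤ, 0 ≤ A ∧ -A ≤ q ∧ q ≤ A :=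
    ⟨|q|, abs_nonneg q, neg_abs_le q, le_abs_self q⟩
  obtain ⟨apq, hapq0, hapq1, hapq2⟩ : ∃ A : ℤ, 0 ≤ A ∧ -A ≤ p + q ∧ p + q ≤ A :=
    ⟨|p + q|, abs_nonneg _, neg_abs_le _, le_abs_self _⟩
  set M := N + ap + aq + apq + 1 with hMdef
  have hM1 : N ≤ M := by omega
  have hM2p : -M ≤ p - N := by omega
  -- the basic quadratic current sum
  set G : ℤ → H := fun m => ∑ a, ρ (J a) m (ρ (J a) (p + q - m) v) with hG
  have hGbot : ∀ m : ℤ, m ≤ p + q - N → G m = 0 := by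
    intro m hm
    simp only [hG]
    exact Finset.sum_eq_zero fun a _ => by rw [hv (J a) (p + q - m) (by omega), map_zero]
  have hGtop : ∀ m : ℤ, N ≤ m →
      G m = (if p + q = 0 then ((m : ℂ) * ℓ) • ((d : ℂ) • v) else 0) := by
    intro m hm
    simp only [hG]
    have hterm : ∀ a : Fin d, ρ (J a) m (ρ (J a) (p + q - m) v)
        = (if p + q = 0 then ((m : ℂ) * ℓ) • v else 0) := by
      intro a
      have e := comm_v κ ℓ ρ hcomm (J a) (J a) m (p + q - m) v
      rw [show m + (p + q - m) = p + q from by ring] at e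
      rw [hv (J a) m hm, map_zero, sub_zero] at e
      have hz : ρ ⁅J a, J a⁆ (p + q) v = 0 := by
        rw [lie_self, show ρ (0 : g) (p + q) = 0 from (hlinear _).map_zero]
        simp
      rw [hz, zero_add] at e
      have hONaa : κ (J a) (J a) = 1 := by simp [hON]
      rw [hONaa] at e
      rw [e]
      split_ifs with hpq
      · congr 1
        ring
      · exact zero_smul ℂ v
    rw [Finset.sum_congr rfl fun a _ => hterm a, Finset.sum_const, Finset.card_univ,
      Fintype.card_fin]
    split_ifs with hpq
    · rw [← Nat.cast_smul_eq_nsmul ℂ d, smul_comm]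
    · simp
  -- rewrite the left-hand side as a windowed double sum
  have t1 : sugawara ρ (fun a => J a) (2 * (ℓ + h))⁻¹ p (L v)
      = (2 * (ℓ + h))⁻¹ • ∑ m ∈ Ioc (-M) M, ∑ a,
          NOterm ρ (fun a => J a) a m p (L v) := by
    unfold sugawara
    rw [sug_sum_eq J ρ hw hM1 hM2p]
  have t2 : L (sugawara ρ (fun a => J a) (2 * (ℓ + h))⁻¹ p v)
      = (2 * (ℓ + h))⁻¹ • ∑ m ∈ Ioc (-M) M, ∑ a,
          L (NOterm ρ (fun a => J a) a m p v) := by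
    rw [show sugawara ρ (fun a => J a) (2 * (ℓ + h))⁻¹ p v
        = (2 * (ℓ + h))⁻¹ • ∑ m ∈ Ioc (-M) M, ∑ a, NOterm ρ (fun a => J a) a m p v from by
      unfold sugawara
      rw [sug_sum_eq J ρ hv hM1 hM2p]]
    rw [map_smul, map_sum]
    congr 1
    exact Finset.sum_congr rfl fun m _ => map_sum L _ _
  have hLHS : sugawara ρ (fun a => J a) (2 * (ℓ + h))⁻¹ p
        (sugawara ρ (fun a => J a) (2 * (ℓ + h))⁻¹ q v)
      - sugawara ρ (fun a => J a) (2 * (ℓ + h))⁻¹ q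
        (sugawara ρ (fun a => J a) (2 * (ℓ + h))⁻¹ p v)
      = (2 * (ℓ + h))⁻¹ • ∑ m ∈ Ioc (-M) M, ∑ a,
          (NOterm ρ (fun a => J a) a m p (L v)
            - L (NOterm ρ (fun a => J a) a m p v)) := by
    rw [hLa, hLa, t1, t2, ← smul_sub, ← Finset.sum_sub_distrib]
    congr 1
    exact Finset.sum_congr rfl fun m _ => by rw [← Finset.sum_sub_distrib]
  have htermB : ∀ (m : ℤ) (a : Fin d),
      NOterm ρ (fun a => J a) a m p (L v) - L (NOterm ρ (fun a => J a) a m p v)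
        = ((p - m : ℤ) : ℂ) • ρ (J a) m (ρ (J a) (p + q - m) v)
          + ((m : ℤ) : ℂ) • ρ (J a) (m + q) (ρ (J a) (p - m) v) := by
    intro m a
    have hB := termB κ J ℓ h ρ hlev hsymm hinv hON hlinear hcomm hsmooth hCox p q a m v
    rw [hLa] at hB
    exact hB
  rw [hLHS, Finset.sum_congr rfl fun m _ => Finset.sum_congr rfl fun a _ => htermB m a]
  simp only [Finset.sum_add_distrib]
  have hS1 : ∀ m : ℤ, ∑ a, ((p - m : ℤ) : ℂ) • ρ (J a) m (ρ (J a) (p + q - m) v)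
      = ((p - m : ℤ) : ℂ) • G m := by
    intro m
    simp only [hG]
    rw [Finset.smul_sum]
  have hS2 : ∀ m : ℤ, ∑ a, ((m : ℤ) : ℂ) • ρ (J a) (m + q) (ρ (J a) (p - m) v)
      = ((m : ℤ) : ℂ) • G (m + q) := by
    intro m
    simp only [hG]
    simp only [show p + q - (m + q) = p - m from by ring]
    rw [Finset.smul_sum]
  rw [Finset.sum_congr rfl fun m _ => hS1 m, Finset.sum_congr rfl fun m _ => hS2 m]
  set f : ℤ → H := fun m => ((m - q : ℤ) : ℂ) • G m with hf
  have hshift : ∑ m ∈ Ioc (-M) M, ((m : ℤ) : ℂ) • G (m + q)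
      = ∑ m ∈ Ioc (-M + q) (M + q), f m := by
    rw [sum_shift f (-M) M q]
    exact Finset.sum_congr rfl fun m _ => by simp only [hf]; simp
  rw [hshift]
  have hfbot : ∀ m : ℤ, m ≤ p + q - N → f m = 0 := fun m hm => by
    simp only [hf]
    rw [hGbot m hm, smul_zero]
  have hwd := windowDiffGen f (p + q - N) q M hfbot (by omega) (by omega) (by omega)
    (by omega)
  have hsh2 : ∑ m ∈ Ioc (-M + q) (M + q), f m
      = ∑ m ∈ Ioc (-M) M, f m
        + (if 0 ≤ q then ∑ m ∈ Ioc M (M + q), f m else -∑ m ∈ Ioc (M + q) M, f m) := by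
    rw [← hwd]
    abel
  rw [hsh2, ← add_assoc]
  have hcombine : ∑ m ∈ Ioc (-M) M, ((p - m : ℤ) : ℂ) • G m + ∑ m ∈ Ioc (-M) M, f m
      = ((p : ℂ) - (q : ℂ)) • ∑ m ∈ Ioc (-M) M, G m := by
    rw [← Finset.sum_add_distrib, Finset.smul_sum]
    apply Finset.sum_congr rfl
    intro m _
    simp only [hf]
    rw [← add_smul]
    congr 1
    push_cast
    ring
  rw [hcombine]
  have hGNO : ∀ m : ℤ, G m = (∑ a, NOterm ρ (fun a => J a) a m (p + q) v)
      + (if p + q = 0 ∧ ¬(m ≤ p + q - m) then ((m : ℂ) * ℓ) • ((d : ℂ) • v) else 0) := by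
    intro m
    simp only [hG]
    have hU : ∀ a : Fin d, ρ (J a) m (ρ (J a) (p + q - m) v)
        = NOterm ρ (fun a => J a) a m (p + q) v
          + (if p + q = 0 ∧ ¬(m ≤ p + q - m) then (m : ℂ) * ℓ else 0) • v := by
      intro a
      rw [NOterm_eq κ J ℓ ρ hON hlinear hcomm a m (p + q) v]
      abel
    rw [Finset.sum_congr rfl fun a _ => hU a, Finset.sum_add_distrib]
    congr 1
    rw [Finset.sum_const, Finset.card_univ, Fintype.card_fin]
    split_ifs with hcond
    · rw [← Nat.cast_smul_eq_nsmul ℂ d, smul_comm]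
    · simp
  have hsumG : ∑ m ∈ Ioc (-M) M, G m
      = (∑ᶠ m : ℤ, ∑ a, NOterm ρ (fun a => J a) a m (p + q) v)
        + ∑ m ∈ Ioc (-M) M,
            (if p + q = 0 ∧ ¬(m ≤ p + q - m) then ((m : ℂ) * ℓ) • ((d : ℂ) • v) else 0) := by
    rw [sug_sum_eq J ρ hv (n := p + q) hM1 (by omega), ← Finset.sum_add_distrib]
    exact Finset.sum_congr rfl fun m _ => hGNO m
  rw [hsumG]
  -- central scalar computation
  have hcentral : ((p : ℂ) - (q : ℂ)) • (∑ m ∈ Ioc (-M) M,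
          (if p + q = 0 ∧ ¬(m ≤ p + q - m) then ((m : ℂ) * ℓ) • ((d : ℂ) • v) else 0))
      + (if 0 ≤ q then ∑ m ∈ Ioc M (M + q), f m else -∑ m ∈ Ioc (M + q) M, f m)
      = (if p + q = 0 then ℓ * (d : ℂ) * ((q : ℂ) - (q : ℂ) ^ 3) / 6 else 0) • v := by
    by_cases hpq : p + q = 0
    · rw [if_pos hpq]
      have hp : (p : ℂ) = -(q : ℂ) := by
        have hpz : p = -q := by omega
        rw [hpz]
        push_cast
        ring
      have hCsum : ∑ m ∈ Ioc (-M) M,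
            (if p + q = 0 ∧ ¬(m ≤ p + q - m) then ((m : ℂ) * ℓ) • ((d : ℂ) • v) else 0)
          = (((M : ℂ) * ((M : ℂ) + 1) / 2) * (ℓ * (d : ℂ))) • v := by
        rw [sum_Ioc_split _ (show -M ≤ (0:ℤ) by omega) (show (0:ℤ) ≤ M by omega)]
        have hz1 : ∑ m ∈ Ioc (-M) (0 : ℤ),
              (if p + q = 0 ∧ ¬(m ≤ p + q - m) then ((m : ℂ) * ℓ) • ((d : ℂ) • v) else 0)
            = 0 := by
          apply Finset.sum_eq_zero
          intro m hm
          rw [Finset.mem_Ioc] at hm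
          rw [if_neg (by rintro ⟨h1, h2⟩; omega)]
        rw [hz1, zero_add]
        have hz2 : ∀ m ∈ Ioc (0 : ℤ) M,
            (if p + q = 0 ∧ ¬(m ≤ p + q - m) then ((m : ℂ) * ℓ) • ((d : ℂ) • v) else 0)
              = ((m : ℂ) * (ℓ * (d : ℂ))) • v := by
          intro m hm
          rw [Finset.mem_Ioc] at hm
          rw [if_pos ⟨hpq, by omega⟩, smul_smul]
          congr 1
          ring
        rw [Finset.sum_congr rfl hz2, ← Finset.sum_smul, ← Finset.sum_mul, gauss1 M (by omega)]
      have hftop : ∀ m : ℤ, N ≤ m →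
          f m = (((m : ℂ) ^ 2 - (q : ℂ) * (m : ℂ)) * (ℓ * (d : ℂ))) • v := by
        intro m hm
        simp only [hf]
        rw [hGtop m hm, if_pos hpq, smul_smul, smul_smul]
        congr 1
        push_cast
        ring
      have htw := topwin_sum q M (by omega) (by omega)
      have hW : (if 0 ≤ q then ∑ m ∈ Ioc M (M + q), f m else -∑ m ∈ Ioc (M + q) M, f m)
          = ((((q : ℂ) - (q : ℂ) ^ 3) / 6 + (q : ℂ) * (M : ℂ) * ((M : ℂ) + 1))
              * (ℓ * (d : ℂ))) • v := by
        split_ifs with hq0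
        · rw [if_pos hq0] at htw
          rw [Finset.sum_congr rfl fun m hm =>
            hftop m (by rw [Finset.mem_Ioc] at hm; omega), ← Finset.sum_smul,
            ← Finset.sum_mul, htw]
        · rw [if_neg hq0] at htw
          rw [Finset.sum_congr rfl fun m hm =>
            hftop m (by rw [Finset.mem_Ioc] at hm; omega), ← Finset.sum_smul,
            ← Finset.sum_mul, ← neg_smul, ← neg_mul, htw]
      rw [hCsum, hW, smul_smul, ← add_smul]
      congr 1
      rw [hp]
      ring
    · rw [if_neg hpq]
      have hC0 : ∑ m ∈ Ioc (-M) M,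
            (if p + q = 0 ∧ ¬(m ≤ p + q - m) then ((m : ℂ) * ℓ) • ((d : ℂ) • v) else 0)
          = 0 :=
        Finset.sum_eq_zero fun m _ => by rw [if_neg (by tauto)]
      have hW0 : (if 0 ≤ q then ∑ m ∈ Ioc M (M + q), f m else -∑ m ∈ Ioc (M + q) M, f m)
          = 0 := by
        split_ifs with hq0
        · apply Finset.sum_eq_zero
          intro m hm
          rw [Finset.mem_Ioc] at hm
          simp only [hf]
          rw [hGtop m (by omega), if_neg hpq, smul_zero]
        · rw [neg_eq_zero]
          apply Finset.sum_eq_zero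
          intro m hm
          rw [Finset.mem_Ioc] at hm
          simp only [hf]
          rw [hGtop m (by omega), if_neg hpq, smul_zero]
      rw [hC0, hW0, smul_zero, add_zero, zero_smul]
  rw [smul_add ((p : ℂ) - (q : ℂ)), add_assoc, hcentral]
  have hfinal1 : (2 * (ℓ + h))⁻¹ • (((p : ℂ) - (q : ℂ))
        • ∑ᶠ m : ℤ, ∑ a, NOterm ρ (fun a => J a) a m (p + q) v)
      = ((p : ℂ) - (q : ℂ)) • sugawara ρ (fun a => J a) (2 * (ℓ + h))⁻¹ (p + q) v := by
    unfold sugawara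
    rw [smul_comm]
  have hfinal2 : (2 * (ℓ + h))⁻¹
        • ((if p + q = 0 then ℓ * (d : ℂ) * ((q : ℂ) - (q : ℂ) ^ 3) / 6 else 0) • v)
      = (if p + q = 0 then ℓ * (d : ℂ) / (ℓ + h) / 12 * ((p : ℂ) ^ 3 - (p : ℂ)) else 0)
          • v := by
    rw [smul_smul]
    congr 1
    by_cases hpq : p + q = 0
    · rw [if_pos hpq, if_pos hpq]
      have hp : (p : ℂ) = -(q : ℂ) := by
        have hpz : p = -q := by omega
        rw [hpz]
        push_cast
        ring
      rw [hp]
      field_simp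
      ring
    · rw [if_neg hpq, if_neg hpq, mul_zero]
  rw [smul_add, hfinal1, hfinal2]
end

section
/- Let g be a finite-dimensional complex Lie algebra with invariant bilinear form κ and orthonormal basis {J^a}, and let V_1, ..., V_n be g-modules. Define Ω_{ij} on V_1⊗...⊗V_n (i ≠ j) by acting with J^a on the i-th and j-th factors and summing over a. Then for pairwise distinct indices i, j, k, l: (a) [Ω_{ij}, Ω_{kl}] = 0, and (b) [Ω_{ij}, Ω_{ik} + Ω_{jk}] = 0. -/
/-!
STATEMENT 9: Let `g` be a finite-dimensional complex Lie algebra with invariant form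
`κ` and orthonormal basis `{Jᵃ}`, and `V₁,...,Vₙ` be `g`-modules. Define `Ω_{ij}`
on `V₁⊗...⊗Vₙ` (for `i ≠ j`) by acting with `Jᵃ` on the `i`-th and `j`-th factors
and summing over `a`. Then for pairwise distinct `i,j,k,l`:
(a) `[Ω_{ij}, Ω_{kl}] = 0`, and (b) `[Ω_{ij}, Ω_{ik} + Ω_{jk}] = 0`.
-/

open scoped TensorProduct

/-- The action of `X ∈ g` on the `i`-th factor of `V₁ ⊗ ... ⊗ Vₙ`. -/
noncomputable def actOn {𝔤 : Type*} [LieRing 𝔤] [LieAlgebra ℂ 𝔤]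
    {n : ℕ} {V : Fin n → Type*} [∀ i, AddCommGroup (V i)] [∀ i, Module ℂ (V i)]
    (ρ : ∀ i, 𝔤 →ₗ[ℂ] Module.End ℂ (V i)) (i : Fin n) (X : 𝔤) :
    (⨂[ℂ] j, V j) →ₗ[ℂ] ⨂[ℂ] j, V j :=
  PiTensorProduct.map
    (Function.update (fun j => (LinearMap.id : V j →ₗ[ℂ] V j)) i (ρ i X))

/-- The operator `Ω_{ij} = ∑_a Jᵃ⁽ⁱ⁾ Jᵃ⁽ʲ⁾` on `V₁ ⊗ ... ⊗ Vₙ`. -/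
noncomputable def casimirPair {𝔤 : Type*} [LieRing 𝔤] [LieAlgebra ℂ 𝔤]
    {n : ℕ} {V : Fin n → Type*} [∀ i, AddCommGroup (V i)] [∀ i, Module ℂ (V i)]
    (ρ : ∀ i, 𝔤 →ₗ[ℂ] Module.End ℂ (V i)) {d : ℕ} (J : Fin d → 𝔤)
    (i j : Fin n) (t : ⨂[ℂ] k, V k) : ⨂[ℂ] k, V k :=
  ∑ a : Fin d, actOn ρ i (J a) (actOn ρ j (J a) t)

section Aux

variable {𝔤 : Type*} [LieRing 𝔤] [LieAlgebra ℂ 𝔤]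
    {n : ℕ} {V : Fin n → Type*} [∀ i, AddCommGroup (V i)] [∀ i, Module ℂ (V i)]
    (ρ : ∀ i, 𝔤 →ₗ[ℂ] Module.End ℂ (V i))

lemma actOn_comm {i j : Fin n} (hij : i ≠ j) (X Y : 𝔤) :
    actOn ρ i X * actOn ρ j Y = actOn ρ j Y * actOn ρ i X := by
  show actOn ρ i X ∘ₗ actOn ρ j Y = actOn ρ j Y ∘ₗ actOn ρ i X
  unfold actOn
  rw [← PiTensorProduct.map_comp, ← PiTensorProduct.map_comp]
  congr 1
  funext m
  by_cases h1 : m = i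
  · subst h1
    simp [Function.update_self, Function.update_of_ne hij]
  · by_cases h2 : m = j
    · subst h2
      simp [Function.update_self, Function.update_of_ne h1]
    · simp [Function.update_of_ne h1, Function.update_of_ne h2]

lemma actOn_mul_same (i : Fin n) (X Y : 𝔤) :
    actOn ρ i X * actOn ρ i Y =
      PiTensorProduct.map
        (Function.update (fun j => (LinearMap.id : V j →ₗ[ℂ] V j)) i (ρ i X * ρ i Y)) := by
  show actOn ρ i X ∘ₗ actOn ρ i Y = _
  unfold actOn
  rw [← PiTensorProduct.map_comp]
  congr 1
  funext m
  by_cases h1 : m = i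
  · subst h1; simp [Function.update_self]; rfl
  · simp [Function.update_of_ne h1]

lemma map_update_sub (i : Fin n) (u v : Module.End ℂ (V i)) :
    PiTensorProduct.map
        (Function.update (fun j => (LinearMap.id : V j →ₗ[ℂ] V j)) i (u - v))
      = PiTensorProduct.map (Function.update (fun j => (LinearMap.id : V j →ₗ[ℂ] V j)) i u)
        - PiTensorProduct.map (Function.update (fun j => (LinearMap.id : V j →ₗ[ℂ] V j)) i v) := by
  rw [sub_eq_add_neg, ← neg_one_smul ℂ v, PiTensorProduct.map_update_add,
    PiTensorProduct.map_update_smul]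
  module

lemma actOn_lie (hrep : ∀ (i : Fin n) (X Y : 𝔤), ρ i ⁅X, Y⁆ = ρ i X * ρ i Y - ρ i Y * ρ i X)
    (i : Fin n) (X Y : 𝔤) :
    actOn ρ i X * actOn ρ i Y - actOn ρ i Y * actOn ρ i X = actOn ρ i ⁅X, Y⁆ := by
  rw [actOn_mul_same, actOn_mul_same, actOn, hrep, map_update_sub]

lemma actOn_add (i : Fin n) (X Y : 𝔤) :
    actOn ρ i (X + Y) = actOn ρ i X + actOn ρ i Y := by
  unfold actOn
  rw [map_add]
  exact PiTensorProduct.map_update_add _ i _ _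

lemma actOn_smul (i : Fin n) (c : ℂ) (X : 𝔤) :
    actOn ρ i (c • X) = c • actOn ρ i X := by
  unfold actOn
  rw [map_smul]
  exact PiTensorProduct.map_update_smul _ i c _

lemma actOn_sum (i : Fin n) {d : ℕ} (g : Fin d → 𝔤) :
    actOn ρ i (∑ c, g c) = ∑ c, actOn ρ i (g c) := by
  let L : 𝔤 →ₗ[ℂ] ((⨂[ℂ] m, V m) →ₗ[ℂ] ⨂[ℂ] m, V m) :=
    { toFun := actOn ρ i
      map_add' := actOn_add ρ i
      map_smul' := actOn_smul ρ i }
  exact map_sum L g Finset.univ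

end Aux



lemma key_b {A : Type*} [Ring A] [Algebra ℂ A] {d : ℕ} (f : Fin d → Fin d → Fin d → ℂ)
    (hf : ∀ a b c, f c b a = - f a b c)
    (P Q R : Fin d → A)
    (hPQ : ∀ a b, P a * Q b = Q b * P a)
    (hPR : ∀ a b, P a * R b = R b * P a)
    (hQR : ∀ a b, Q a * R b = R b * Q a)
    (hP : ∀ a b, P a * P b - P b * P a = ∑ c, f a b c • P c)
    (hQ : ∀ a b, Q a * Q b - Q b * Q a = ∑ c, f a b c • Q c) :
    (∑ a, P a * Q a) * ((∑ b, P b * R b) + ∑ b, Q b * R b)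
      = ((∑ b, P b * R b) + ∑ b, Q b * R b) * (∑ a, P a * Q a) := by
  rw [← sub_eq_zero]
  have t1 : ∀ a b : Fin d, P a * Q a * (P b * R b) = P a * (P b * (Q a * R b)) := by
    intro a b
    rw [mul_assoc, ← mul_assoc (Q a), ← hPQ b a, mul_assoc (P b)]
  have t2 : ∀ a b : Fin d, P b * R b * (P a * Q a) = P b * (P a * (Q a * R b)) := by
    intro a b
    rw [mul_assoc, ← mul_assoc (R b), ← hPR a b, mul_assoc (P a), ← hQR a b]
  have t3 : ∀ a b : Fin d, P a * Q a * (P b * R b) - P b * R b * (P a * Q a)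
      = ∑ c, f a b c • (P c * (Q a * R b)) := by
    intro a b
    rw [t1, t2, ← mul_assoc (P a) (P b), ← mul_assoc (P b) (P a), ← sub_mul, hP a b,
      Finset.sum_mul]
    exact Finset.sum_congr rfl fun c _ => smul_mul_assoc _ _ _
  have t4 : ∀ a b : Fin d, P a * Q a * (Q b * R b) = P a * (Q a * Q b * R b) := by
    intro a b
    rw [mul_assoc, ← mul_assoc (Q a)]
  have t5 : ∀ a b : Fin d, Q b * R b * (P a * Q a) = P a * (Q b * Q a * R b) := by
    intro a b
    rw [mul_assoc, ← mul_assoc (R b), ← hPR a b, mul_assoc (P a), ← hQR a b,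
      ← mul_assoc, ← hPQ a b, mul_assoc, ← mul_assoc (Q b)]
  have t6 : ∀ a b : Fin d, P a * Q a * (Q b * R b) - Q b * R b * (P a * Q a)
      = ∑ c, f a b c • (P a * (Q c * R b)) := by
    intro a b
    rw [t4, t5, ← mul_sub, ← sub_mul, hQ a b, Finset.sum_mul, Finset.mul_sum]
    exact Finset.sum_congr rfl fun c _ => by rw [smul_mul_assoc, mul_smul_comm]
  -- expand the products of sums
  rw [mul_add, add_mul, Finset.sum_mul_sum, Finset.sum_mul_sum, Finset.sum_mul_sum,
    Finset.sum_mul_sum]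
  have hc1 : (∑ b : Fin d, ∑ a : Fin d, P b * R b * (P a * Q a))
      = ∑ a : Fin d, ∑ b : Fin d, P b * R b * (P a * Q a) := Finset.sum_comm
  have hc2 : (∑ b : Fin d, ∑ a : Fin d, Q b * R b * (P a * Q a))
      = ∑ a : Fin d, ∑ b : Fin d, Q b * R b * (P a * Q a) := Finset.sum_comm
  rw [hc1, hc2]
  have : ((∑ a, ∑ b, P a * Q a * (P b * R b)) + ∑ a, ∑ b, P a * Q a * (Q b * R b))
        - ((∑ a, ∑ b, P b * R b * (P a * Q a)) + ∑ a, ∑ b, Q b * R b * (P a * Q a))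
      = (∑ a, ∑ b, ∑ c, f a b c • (P c * (Q a * R b)))
        + ∑ a, ∑ b, ∑ c, f a b c • (P a * (Q c * R b)) := by
    rw [add_sub_add_comm, ← Finset.sum_sub_distrib, ← Finset.sum_sub_distrib]
    congr 1
    · refine Finset.sum_congr rfl fun a _ => ?_
      rw [← Finset.sum_sub_distrib]
      exact Finset.sum_congr rfl fun b _ => t3 a b
    · refine Finset.sum_congr rfl fun a _ => ?_
      rw [← Finset.sum_sub_distrib]
      exact Finset.sum_congr rfl fun b _ => t6 a b
  rw [this]
  -- reindex the second triple sum by swapping the first and third indices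
  have flat : ∀ (G : Fin d → Fin d → Fin d → A),
      (∑ a, ∑ b, ∑ c, G a b c) = ∑ p : Fin d × Fin d × Fin d, G p.1 p.2.1 p.2.2 := by
    intro G
    rw [Fintype.sum_prod_type]
    refine Finset.sum_congr rfl fun a _ => ?_
    rw [Fintype.sum_prod_type]
  rw [flat, flat]
  have swap : (∑ p : Fin d × Fin d × Fin d, f p.1 p.2.1 p.2.2 • (P p.1 * (Q p.2.2 * R p.2.1)))
      = ∑ p : Fin d × Fin d × Fin d, f p.2.2 p.2.1 p.1 • (P p.2.2 * (Q p.1 * R p.2.1)) := by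
    refine Fintype.sum_equiv
      ⟨fun p => (p.2.2, p.2.1, p.1), fun p => (p.2.2, p.2.1, p.1), fun p => rfl, fun p => rfl⟩
      _ _ fun p => rfl
  rw [swap, ← Finset.sum_add_distrib]
  refine Finset.sum_eq_zero fun p _ => ?_
  rw [hf p.1 p.2.1 p.2.2, neg_smul]
  simp

lemma kappa_expand {𝔤 : Type*} [LieRing 𝔤] [LieAlgebra ℂ 𝔤]
    (κ : LinearMap.BilinForm ℂ 𝔤) {d : ℕ} (J : Module.Basis (Fin d) ℂ 𝔤)
    (hON : ∀ a b : Fin d, κ (J a) (J b) = if a = b then 1 else 0) (X : 𝔤) :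
    X = ∑ c, κ X (J c) • J c := by
  have h : ∀ c, κ X (J c) = J.repr X c := by
    intro c
    conv_lhs => rw [← J.sum_repr X]
    simp only [map_sum, map_smul, LinearMap.sum_apply, LinearMap.smul_apply, hON, smul_eq_mul,
      mul_ite, mul_one, mul_zero, Finset.sum_ite_eq', Finset.mem_univ, if_true]
  simp_rw [h]
  exact (J.sum_repr X).symm

/-- The infinitesimal pure braid relations for the operators `Ω_{ij}`. -/
theorem infinitesimal_braid_relations {𝔤 : Type*} [LieRing 𝔤] [LieAlgebra ℂ 𝔤]
    [FiniteDimensional ℂ 𝔤] (κ : LinearMap.BilinForm ℂ 𝔤)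
    (hsymm : ∀ X Y : 𝔤, κ X Y = κ Y X)
    (hinv : ∀ X Y Z : 𝔤, κ ⁅X, Y⁆ Z = κ X ⁅Y, Z⁆)
    {d : ℕ} (J : Module.Basis (Fin d) ℂ 𝔤)
    (hON : ∀ a b : Fin d, κ (J a) (J b) = if a = b then 1 else 0)
    {n : ℕ} {V : Fin n → Type*} [∀ i, AddCommGroup (V i)] [∀ i, Module ℂ (V i)]
    (ρ : ∀ i, 𝔤 →ₗ[ℂ] Module.End ℂ (V i))
    (hrep : ∀ (i : Fin n) (X Y : 𝔤), ρ i ⁅X, Y⁆ = ρ i X * ρ i Y - ρ i Y * ρ i X)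
    (i j k l : Fin n) (hij : i ≠ j) (hik : i ≠ k) (hil : i ≠ l)
    (hjk : j ≠ k) (hjl : j ≠ l) (hkl : k ≠ l) :
    (∀ t : ⨂[ℂ] m, V m,
        casimirPair ρ (fun a => J a) i j (casimirPair ρ (fun a => J a) k l t)
          = casimirPair ρ (fun a => J a) k l (casimirPair ρ (fun a => J a) i j t)) ∧
    (∀ t : ⨂[ℂ] m, V m,
        casimirPair ρ (fun a => J a) i j
            (casimirPair ρ (fun a => J a) i k t + casimirPair ρ (fun a => J a) j k t)
          = casimirPair ρ (fun a => J a) i k (casimirPair ρ (fun a => J a) i j t)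
            + casimirPair ρ (fun a => J a) j k (casimirPair ρ (fun a => J a) i j t)) := by
  classical
  have casimir_eq : ∀ (i' j' : Fin n) (t : ⨂[ℂ] m, V m),
      casimirPair ρ (fun a => J a) i' j' t
        = (∑ a, actOn ρ i' (J a) * actOn ρ j' (J a)) t := by
    intro i' j' t
    simp [casimirPair, LinearMap.sum_apply, Module.End.mul_apply]
  have hfskew : ∀ a b c : Fin d, κ ⁅J c, J b⁆ (J a) = - κ ⁅J a, J b⁆ (J c) := by
    intro a b c
    rw [← lie_skew (J c) (J b), map_neg, LinearMap.neg_apply,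
      hsymm ⁅J b, J c⁆ (J a), ← hinv]
  have hbracket : ∀ (i' : Fin n) (a b : Fin d),
      actOn ρ i' (J a) * actOn ρ i' (J b) - actOn ρ i' (J b) * actOn ρ i' (J a)
        = ∑ c, κ ⁅J a, J b⁆ (J c) • actOn ρ i' (J c) := by
    intro i' a b
    rw [actOn_lie ρ hrep]
    conv_lhs => rw [kappa_expand κ J hON ⁅J a, J b⁆]
    rw [actOn_sum]
    exact Finset.sum_congr rfl fun c _ => actOn_smul ρ i' _ _
  set P : Fin d → Module.End ℂ (⨂[ℂ] m, V m) := fun a => actOn ρ i (J a) with hP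
  set Q : Fin d → Module.End ℂ (⨂[ℂ] m, V m) := fun a => actOn ρ j (J a) with hQ
  set R : Fin d → Module.End ℂ (⨂[ℂ] m, V m) := fun a => actOn ρ k (J a) with hR
  set S : Fin d → Module.End ℂ (⨂[ℂ] m, V m) := fun a => actOn ρ l (J a) with hS
  constructor
  · -- part (a)
    have hcomm : (∑ a, P a * Q a) * (∑ b, R b * S b)
        = (∑ b, R b * S b) * (∑ a, P a * Q a) := by
      refine Commute.sum_left _ _ _ fun a _ => Commute.sum_right _ _ _ fun b _ => ?_
      exact Commute.mul_right
        (Commute.mul_left (actOn_comm ρ hik (J a) (J b)) (actOn_comm ρ hjk (J a) (J b)))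
        (Commute.mul_left (actOn_comm ρ hil (J a) (J b)) (actOn_comm ρ hjl (J a) (J b)))
    intro t
    simp only [casimir_eq]
    rw [← Module.End.mul_apply, ← Module.End.mul_apply]
    exact congrFun (congrArg _ hcomm) t
  · -- part (b)
    have hbmain := key_b (A := Module.End ℂ (⨂[ℂ] m, V m))
      (fun a b c => κ ⁅J a, J b⁆ (J c)) hfskew P Q R
      (fun a b => actOn_comm ρ hij (J a) (J b))
      (fun a b => actOn_comm ρ hik (J a) (J b))
      (fun a b => actOn_comm ρ hjk (J a) (J b))
      (hbracket i) (hbracket j)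
    intro t
    simp only [casimir_eq]
    calc (∑ a, P a * Q a) ((∑ a, P a * R a) t + (∑ a, Q a * R a) t)
        = ((∑ a, P a * Q a) * ((∑ b, P b * R b) + ∑ b, Q b * R b)) t := by
          rw [Module.End.mul_apply, LinearMap.add_apply, map_add]
      _ = (((∑ b, P b * R b) + ∑ b, Q b * R b) * (∑ a, P a * Q a)) t := by rw [hbmain]
      _ = (∑ a, P a * R a) ((∑ a, P a * Q a) t) + (∑ a, Q a * R a) ((∑ a, P a * Q a) t) := by
          rw [Module.End.mul_apply, LinearMap.add_apply]
end
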